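/- Let J, R, Q ∈ ℂ^{n×n} with J skew-Hermitian, R Hermitian positive semidefinite, Q Hermitian positive definite, B ∈ ℂ^{n×r}, w ∈ ℝ, and x ∈ ℂ^n satisfying (I − BB†)(iwI − (J−R)Q)x = 0. Then Re((B*Qx)* B†(iwI − (J−R)Q)x) = x*QRQx ≥ 0. -/

import Mathlib

open Matrix
open scoped ComplexOrder

/-- `Xd` is the Moore–Penrose pseudoinverse of `X` (the four Penrose conditions). -/
def IsMoorePenroseInv {m n : Type*} [Fintype m] [Fintype n]
    (X : Matrix m n ℂ) (Xd : Matrix n m ℂ) : Prop :=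
  X * Xd * X = X ∧ Xd * X * Xd = Xd ∧ (X * Xd)ᴴ = X * Xd ∧ (Xd * X)ᴴ = Xd * X

theorem re_inner_eq_xQRQx_nonneg
    {n r : ℕ} (J R Q : Matrix (Fin n) (Fin n) ℂ)
    (hJ : Jᴴ = -J) (hR : R.PosSemidef) (hQ : Q.PosDef)
    (B : Matrix (Fin n) (Fin r) ℂ) (Bd : Matrix (Fin r) (Fin n) ℂ)
    (hBd : IsMoorePenroseInv B Bd)
    (w : ℝ) (x : Fin n → ℂ)
    (hx : ((1 - B * Bd) * ((Complex.I * w) • (1 : Matrix (Fin n) (Fin n) ℂ)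
        - (J - R) * Q)) *ᵥ x = 0) :
    ((star ((Bᴴ * Q) *ᵥ x)) ⬝ᵥ
        ((Bd * ((Complex.I * w) • (1 : Matrix (Fin n) (Fin n) ℂ) - (J - R) * Q)) *ᵥ x)).re
      = ((star x) ⬝ᵥ ((Q * R * Q) *ᵥ x)).re ∧
    0 ≤ ((star x) ⬝ᵥ ((Q * R * Q) *ᵥ x)).re := by
  set A : Matrix (Fin n) (Fin n) ℂ :=
    (Complex.I * w) • (1 : Matrix (Fin n) (Fin n) ℂ) - (J - R) * Q with hA
  have hQH : Qᴴ = Q := hQ.1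
  set y : Fin n → ℂ := Q *ᵥ x with hy
  -- from hx : (B * Bd * A) *ᵥ x = A *ᵥ x
  have hxA : (B * Bd * A) *ᵥ x = A *ᵥ x := by
    have h := hx
    rw [Matrix.sub_mul, Matrix.one_mul, Matrix.sub_mulVec, sub_eq_zero] at h
    exact h.symm
  -- LHS rewrite
  have lhs_eq : (star ((Bᴴ * Q) *ᵥ x)) ⬝ᵥ ((Bd * A) *ᵥ x)
      = star x ⬝ᵥ ((Q * A) *ᵥ x) := by
    rw [Matrix.star_mulVec, ← Matrix.dotProduct_mulVec, Matrix.mulVec_mulVec,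
      Matrix.conjTranspose_mul, hQH, Matrix.conjTranspose_conjTranspose]
    have : Q * B * (Bd * A) = Q * (B * Bd * A) := by
      simp only [Matrix.mul_assoc]
    rw [this, ← Matrix.mulVec_mulVec, hxA, Matrix.mulVec_mulVec]
  -- expand Q * A
  have expand : star x ⬝ᵥ ((Q * A) *ᵥ x)
      = (Complex.I * w) * (star x ⬝ᵥ (Q *ᵥ x))
        - star y ⬝ᵥ (J *ᵥ y) + star x ⬝ᵥ ((Q * R * Q) *ᵥ x) := by
    have hQA : Q * A = (Complex.I * w) • Q - Q * J * Q + Q * R * Q := by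
      rw [hA]
      rw [Matrix.mul_sub, Matrix.mul_smul, Matrix.mul_one]
      rw [Matrix.sub_mul, Matrix.mul_sub]
      ring_nf
      rw [Matrix.mul_assoc, Matrix.mul_assoc]
      abel
    rw [hQA, Matrix.add_mulVec, Matrix.sub_mulVec, Matrix.smul_mulVec,
      dotProduct_add, dotProduct_sub, dotProduct_smul]
    have : star y ⬝ᵥ (J *ᵥ y) = star x ⬝ᵥ ((Q * J * Q) *ᵥ x) := by
      rw [hy, Matrix.star_mulVec, hQH, ← Matrix.dotProduct_mulVec,
        Matrix.mulVec_mulVec, Matrix.mulVec_mulVec, Matrix.mul_assoc]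
    rw [this]
    simp [smul_eq_mul]
  -- the Q quadratic form is nonneg real
  have hQreal : 0 ≤ star x ⬝ᵥ (Q *ᵥ x) := hQ.posSemidef.dotProduct_mulVec_nonneg x
  have hQim : (star x ⬝ᵥ (Q *ᵥ x)).im = 0 := by
    have := (Complex.le_def.mp hQreal).2
    simpa using this.symm
  -- J quadratic form is purely imaginary
  have hJre : (star y ⬝ᵥ (J *ᵥ y)).re = 0 := by
    have hc : star (star y ⬝ᵥ (J *ᵥ y)) = -(star y ⬝ᵥ (J *ᵥ y)) := by
      rw [dotProduct_comm, ← star_dotProduct_star, star_star, Matrix.star_mulVec,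
        dotProduct_comm, ← Matrix.dotProduct_mulVec, hJ, Matrix.neg_mulVec,
        dotProduct_neg]
      exact congrArg Neg.neg (dotProduct_comm _ _)
    have h2 : (star y ⬝ᵥ (J *ᵥ y)).re = -(star y ⬝ᵥ (J *ᵥ y)).re := by
      simpa using congrArg Complex.re hc
    linarith
  have hRQ : star x ⬝ᵥ ((Q * R * Q) *ᵥ x) = star y ⬝ᵥ (R *ᵥ y) := by
    rw [hy, Matrix.star_mulVec, hQH, ← Matrix.dotProduct_mulVec,
      Matrix.mulVec_mulVec, Matrix.mulVec_mulVec]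
  have hRpos : 0 ≤ (star y ⬝ᵥ (R *ᵥ y)).re := (Complex.le_def.mp (hR.dotProduct_mulVec_nonneg y)).1
  constructor
  · rw [lhs_eq, expand]
    simp [Complex.add_re, Complex.sub_re, Complex.mul_re, Complex.mul_im,
      Complex.I_re, Complex.I_im, hQim, hJre]
  · rw [hRQ]; exact hRpos
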